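/- Let H(x) = tanh(x/√2), Y₁(x) = sech(x/√2)·tanh(x/√2) and Y₀(x) = −(1/√3)·sech(x/√2). Then the pair (φ, ψ) with φ(t,x) = Y₁(x)·sin(t·√(3/2)) and ψ(t,x) = Y₀(x)·cos(t·√(3/2)) satisfies the linearized Bäcklund system for φ⁴: for all (t,x) ∈ ℝ², ∂_x φ − ∂_t ψ = −√2·H(x)·φ and ∂_t φ − ∂_x ψ = −√2·H(x)·ψ. (The internal modes of 𝓛_H and of its dual 𝓛̃_H are connected by the linearized Bäcklund transformation.) -/

import Mathlib

/-- The φ⁴ kink. -/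
noncomputable def phi4Kink (x : ℝ) : ℝ := Real.tanh (x / Real.sqrt 2)

/-- The internal mode of the linearized φ⁴ operator 𝓛_H. -/
noncomputable def Y₁ (x : ℝ) : ℝ :=
  (1 / Real.cosh (x / Real.sqrt 2)) * Real.tanh (x / Real.sqrt 2)

/-- The eigenfunction of the dual operator 𝓛̃_H with eigenvalue 3/2. -/
noncomputable def Y₀ (x : ℝ) : ℝ :=
  -(1 / Real.sqrt 3) * (1 / Real.cosh (x / Real.sqrt 2))

/-- The pair (Y₁(x) sin(t√(3/2)), Y₀(x) cos(t√(3/2))) satisfies the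
linearized Bäcklund system for φ⁴: the internal modes of 𝓛_H and its dual are connected
by the linearized Bäcklund transformation. -/
theorem internal_modes_linearized_backlund_phi4 :
    ∀ t x : ℝ,
      deriv (fun x' => Y₁ x' * Real.sin (t * Real.sqrt (3 / 2))) x
          - deriv (fun t' => Y₀ x * Real.cos (t' * Real.sqrt (3 / 2))) t
        = -Real.sqrt 2 * phi4Kink x * (Y₁ x * Real.sin (t * Real.sqrt (3 / 2)))
      ∧ deriv (fun t' => Y₁ x * Real.sin (t' * Real.sqrt (3 / 2))) t
          - deriv (fun x' => Y₀ x' * Real.cos (t * Real.sqrt (3 / 2))) x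
        = -Real.sqrt 2 * phi4Kink x * (Y₀ x * Real.cos (t * Real.sqrt (3 / 2))) := by
  intro t x
  have h2 : (0:ℝ) < Real.sqrt 2 := by positivity
  have h3 : (0:ℝ) < Real.sqrt 3 := by positivity
  have h2sq : Real.sqrt 2 * Real.sqrt 2 = 2 := Real.mul_self_sqrt (by norm_num)
  have h3sq : Real.sqrt 3 * Real.sqrt 3 = 3 := Real.mul_self_sqrt (by norm_num)
  have ha : Real.sqrt (3/2) = Real.sqrt 3 / Real.sqrt 2 := by
    rw [eq_div_iff h2.ne', ← Real.sqrt_mul (by norm_num)]; norm_num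
  set u := x / Real.sqrt 2 with hu
  have hch : Real.cosh u ≠ 0 := (Real.cosh_pos u).ne'
  have hchsq : Real.cosh u ^ 2 = Real.sinh u ^ 2 + 1 := Real.cosh_sq u
  have hdu : HasDerivAt (fun x' : ℝ => x' / Real.sqrt 2) (1 / Real.sqrt 2) x := by
    simpa using (hasDerivAt_id x).div_const (Real.sqrt 2)
  have hch' : HasDerivAt (fun x' => Real.cosh (x' / Real.sqrt 2))
      (Real.sinh u * (1 / Real.sqrt 2)) x := by
    rw [hu]; exact (Real.hasDerivAt_cosh (x / Real.sqrt 2)).comp x hdu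
  have hsh' : HasDerivAt (fun x' => Real.sinh (x' / Real.sqrt 2))
      (Real.cosh u * (1 / Real.sqrt 2)) x := by
    rw [hu]; exact (Real.hasDerivAt_sinh (x / Real.sqrt 2)).comp x hdu
  have hinv : HasDerivAt (fun x' => 1 / Real.cosh (x' / Real.sqrt 2))
      (-(Real.sinh u * (1 / Real.sqrt 2)) / Real.cosh u ^ 2) x := by
    simpa [one_div, ← hu, Pi.inv_def] using hch'.inv hch
  have htanh : HasDerivAt (fun x' => Real.tanh (x' / Real.sqrt 2))
      ((Real.cosh u * (1 / Real.sqrt 2) * Real.cosh u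
        - Real.sinh u * (Real.sinh u * (1 / Real.sqrt 2))) / Real.cosh u ^ 2) x := by
    simpa [Real.tanh_eq_sinh_div_cosh, ← hu, Pi.div_def] using hsh'.div hch' hch
  have hY1 : HasDerivAt Y₁
      ((-(Real.sinh u * (1 / Real.sqrt 2)) / Real.cosh u ^ 2) * Real.tanh u
        + (1 / Real.cosh u) * ((Real.cosh u * (1 / Real.sqrt 2) * Real.cosh u
          - Real.sinh u * (Real.sinh u * (1 / Real.sqrt 2))) / Real.cosh u ^ 2)) x := by
    unfold Y₁; exact hinv.mul htanh
  have hY0 : HasDerivAt Y₀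
      (-(1 / Real.sqrt 3) * (-(Real.sinh u * (1 / Real.sqrt 2)) / Real.cosh u ^ 2)) x := by
    unfold Y₀; exact hinv.const_mul _
  have hta : HasDerivAt (fun t' : ℝ => t' * Real.sqrt (3/2)) (Real.sqrt (3/2)) t :=
    hasDerivAt_mul_const _
  have hcos : HasDerivAt (fun t' => Y₀ x * Real.cos (t' * Real.sqrt (3/2)))
      (Y₀ x * (-Real.sin (t * Real.sqrt (3/2)) * Real.sqrt (3/2))) t :=
    ((Real.hasDerivAt_cos (t * Real.sqrt (3/2))).comp t hta).const_mul _
  have hsin : HasDerivAt (fun t' => Y₁ x * Real.sin (t' * Real.sqrt (3/2)))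
      (Y₁ x * (Real.cos (t * Real.sqrt (3/2)) * Real.sqrt (3/2))) t :=
    ((Real.hasDerivAt_sin (t * Real.sqrt (3/2))).comp t hta).const_mul _
  have hX1 : HasDerivAt (fun x' => Y₁ x' * Real.sin (t * Real.sqrt (3/2)))
      (((-(Real.sinh u * (1 / Real.sqrt 2)) / Real.cosh u ^ 2) * Real.tanh u
        + (1 / Real.cosh u) * ((Real.cosh u * (1 / Real.sqrt 2) * Real.cosh u
          - Real.sinh u * (Real.sinh u * (1 / Real.sqrt 2))) / Real.cosh u ^ 2))
        * Real.sin (t * Real.sqrt (3/2))) x := hY1.mul_const _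
  have hX0 : HasDerivAt (fun x' => Y₀ x' * Real.cos (t * Real.sqrt (3/2)))
      ((-(1 / Real.sqrt 3) * (-(Real.sinh u * (1 / Real.sqrt 2)) / Real.cosh u ^ 2))
        * Real.cos (t * Real.sqrt (3/2))) x := hY0.mul_const _
  rw [hX1.deriv, hcos.deriv, hsin.deriv, hX0.deriv] at *
  have hs2 : Real.sqrt 2 ^ 2 = 2 := Real.sq_sqrt (by norm_num)
  have hs3 : Real.sqrt 3 ^ 2 = 3 := Real.sq_sqrt (by norm_num)
  constructor
  · simp only [Y₀, Y₁, phi4Kink, ← hu, Real.tanh_eq_sinh_div_cosh, ha]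
    field_simp
    ring_nf
    linear_combination (Real.sin (t * Real.sqrt 3 * (Real.sqrt 2)⁻¹) * Real.sinh u ^ 2) * hs2
  · simp only [Y₀, Y₁, phi4Kink, ← hu, Real.tanh_eq_sinh_div_cosh, ha]
    field_simp
    ring_nf
    linear_combination (Real.sinh u * Real.cos (t * Real.sqrt 3 * (Real.sqrt 2)⁻¹)) * hs3
      - (Real.sinh u * Real.cos (t * Real.sqrt 3 * (Real.sqrt 2)⁻¹)) * hs2
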